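/- For the phase φ^λ(x,t;ω) := (λ/t)√(λ² + |x−tω|²), the rescaled Gauss map is independent of the spatial point: the unit vector in the direction of ∂_{ω_1}∇_{x,t}φ^λ ∧ ⋯ ∧ ∂_{ω_{n−1}}∇_{x,t}φ^λ equals ±(ω,1)/√(1+|ω|²) ∈ ℝ^n. Equivalently, the n-vector ∂_{ω_1}∇_{x,t}φ^λ ∧ ⋯ ∧ ∂_{ω_{n−1}}∇_{x,t}φ^λ is parallel to (ω,1). -/

import Mathlib

lemma aux_det_parallel {m : ℕ} (A : Fin m → Fin (m+1) → ℝ) (c0 : Fin (m+1) → ℝ)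
    (hc0 : c0 (Fin.last m) = 1) (hA : ∀ j, ∑ k, c0 k * A j k = 0) :
    ∃ c : ℝ, ∀ u : Fin (m+1) → ℝ,
      (Matrix.of (Fin.snoc A u)).det = c * ∑ k, c0 k * u k := by
  set κ : ℝ := ∑ k, c0 k * c0 k with hκ
  have hκpos : 0 < κ := by
    refine Finset.sum_pos' (fun k _ => mul_self_nonneg _) ⟨Fin.last m, Finset.mem_univ _, ?_⟩
    rw [hc0]; norm_num
  have key : ∀ u : Fin (m+1) → ℝ, (∑ k, c0 k * u k) = 0 →
      (Matrix.of (Fin.snoc A u)).det = 0 := by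
    intro u hu
    have hmv : (Matrix.of (Fin.snoc A u)).mulVec c0 = 0 := by
      funext i
      refine Fin.lastCases ?_ ?_ i
      · simpa [Matrix.mulVec, dotProduct, mul_comm] using hu
      · intro j
        have := hA j
        simpa [Matrix.mulVec, dotProduct, mul_comm] using this
    by_contra hdet
    have h0 := Matrix.eq_zero_of_mulVec_eq_zero hdet hmv
    rw [h0] at hc0
    simp at hc0
  have hrow : ∀ u : Fin (m+1) → ℝ,
      Matrix.of (Fin.snoc A u) = (Matrix.of (Fin.snoc A c0)).updateRow (Fin.last m) u := by
    intro u
    ext i k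
    refine Fin.lastCases ?_ ?_ i
    · simp
    · intro j
      simp [Matrix.updateRow_apply, (Fin.castSucc_lt_last j).ne]
  refine ⟨(Matrix.of (Fin.snoc A c0)).det / κ, fun u => ?_⟩
  set α : ℝ := (∑ k, c0 k * u k) / κ with hα
  have hu' : (∑ k, c0 k * (u - α • c0) k) = 0 := by
    simp only [Pi.sub_apply, Pi.smul_apply, smul_eq_mul, mul_sub, Finset.sum_sub_distrib]
    rw [hα]
    have : ∑ k, c0 k * ((∑ k, c0 k * u k) / κ * c0 k) = (∑ k, c0 k * u k) / κ * κ := by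
      rw [hκ, Finset.mul_sum]; exact Finset.sum_congr rfl fun k _ => by ring
    rw [this, div_mul_cancel₀ _ hκpos.ne']
    ring
  have hdecomp : u = (u - α • c0) + α • c0 := by funext k; simp
  calc (Matrix.of (Fin.snoc A u)).det
      = ((Matrix.of (Fin.snoc A c0)).updateRow (Fin.last m) ((u - α • c0) + α • c0)).det := by
        rw [hrow u, ← hdecomp]
    _ = ((Matrix.of (Fin.snoc A c0)).updateRow (Fin.last m) (u - α • c0)).det
        + α * ((Matrix.of (Fin.snoc A c0)).updateRow (Fin.last m) c0).det := by
        rw [Matrix.det_updateRow_add, Matrix.det_updateRow_smul]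
    _ = α * (Matrix.of (Fin.snoc A c0)).det := by
        rw [← hrow, key _ hu']
        rw [← hrow c0]; ring
    _ = (Matrix.of (Fin.snoc A c0)).det / κ * ∑ k, c0 k * u k := by
        rw [hα]; ring


set_option maxHeartbeats 1000000 in
lemma aux_row (m : ℕ) (lam : ℝ) (hlam : 0 < lam) (x ω : Fin m → ℝ) (t : ℝ)
    (ht : t ≠ 0) (j : Fin m) :
    ∑ k : Fin (m+1), (Fin.snoc ω 1 : Fin (m+1) → ℝ) k *
      deriv (fun s : ℝ => deriv (fun w : ℝ =>
        (lam / (((Fin.snoc x t : Fin (m+1) → ℝ) + w • (Pi.single k 1 : Fin (m+1) → ℝ)) (Fin.last m))) *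
          Real.sqrt (lam ^ 2 + ∑ i : Fin m,
            (((Fin.snoc x t : Fin (m+1) → ℝ) + w • (Pi.single k 1 : Fin (m+1) → ℝ)) i.castSucc -
              ((Fin.snoc x t : Fin (m+1) → ℝ) + w • (Pi.single k 1 : Fin (m+1) → ℝ)) (Fin.last m) *
              (ω + s • (Pi.single j 1 : Fin m → ℝ)) i) ^ 2)) 0) 0 = 0 := by
  set v : Fin m → ℝ := fun i => x i - t * ω i with hv
  have hq : 0 < lam ^ 2 + ∑ i, v i ^ 2 := by positivity
  set q : ℝ := lam ^ 2 + ∑ i, v i ^ 2 with hqdef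
  have hrpos : 0 < Real.sqrt q := Real.sqrt_pos.mpr hq
  have hrne : Real.sqrt q ≠ 0 := hrpos.ne'
  -- pointwise identities in s
  have hnum : ∀ (s : ℝ) (i : Fin m),
      x i - t * (ω + s • (Pi.single j 1 : Fin m → ℝ)) i
        = v i - s * t * (if i = j then (1:ℝ) else 0) := by
    intro s i
    by_cases hi : i = j <;> simp [hv, hi, Pi.single_apply] <;> ring
  have hPid : ∀ s : ℝ,
      lam ^ 2 + ∑ i, (x i - t * (ω + s • (Pi.single j 1 : Fin m → ℝ)) i) ^ 2
        = q - 2*s*t*v j + s^2*t^2 := by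
    intro s
    have h1 : ∀ i : Fin m, (x i - t * (ω + s • (Pi.single j 1 : Fin m → ℝ)) i) ^ 2
        = v i ^ 2 + (if i = j then (-(2*s*t*v i) + s^2*t^2) else 0) := by
      intro i
      rw [hnum s i]
      by_cases hi : i = j <;> simp [hi] <;> ring
    rw [Finset.sum_congr rfl fun i _ => h1 i, Finset.sum_add_distrib,
      Finset.sum_ite_eq' Finset.univ j]
    simp only [Finset.mem_univ, if_true, hqdef]
    ring
  have hPpos : ∀ s : ℝ, 0 < q - 2*s*t*v j + s^2*t^2 := by
    intro s; rw [← hPid s]; positivity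
  have hNid : ∀ s : ℝ,
      ∑ i, (x i - t * (ω + s • (Pi.single j 1 : Fin m → ℝ)) i)
          * (ω + s • (Pi.single j 1 : Fin m → ℝ)) i
        = (∑ i, v i * ω i) + s*(v j - t*ω j) - s^2*t := by
    intro s
    have h1 : ∀ i : Fin m, (x i - t * (ω + s • (Pi.single j 1 : Fin m → ℝ)) i)
          * (ω + s • (Pi.single j 1 : Fin m → ℝ)) i
        = v i * ω i + (if i = j then (s*(v i - t*ω i) - s^2*t) else 0) := by
      intro i
      rw [hnum s i]
      by_cases hi : i = j <;> simp [hi, Pi.single_apply] <;> ring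
    rw [Finset.sum_congr rfl fun i _ => h1 i, Finset.sum_add_distrib,
      Finset.sum_ite_eq' Finset.univ j]
    simp only [Finset.mem_univ, if_true]
    ring
  -- inner derivative, spatial direction
  have hinnerA : ∀ (i₀ : Fin m) (ω' : Fin m → ℝ),
      deriv (fun w : ℝ =>
        (lam / (((Fin.snoc x t : Fin (m+1) → ℝ) + w • (Pi.single i₀.castSucc 1 : Fin (m+1) → ℝ)) (Fin.last m))) *
          Real.sqrt (lam ^ 2 + ∑ i : Fin m,
            (((Fin.snoc x t : Fin (m+1) → ℝ) + w • (Pi.single i₀.castSucc 1 : Fin (m+1) → ℝ)) i.castSucc -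
              ((Fin.snoc x t : Fin (m+1) → ℝ) + w • (Pi.single i₀.castSucc 1 : Fin (m+1) → ℝ)) (Fin.last m) *
              ω' i) ^ 2)) 0
      = (lam / t) * ((x i₀ - t * ω' i₀) / Real.sqrt (lam ^ 2 + ∑ i, (x i - t * ω' i) ^ 2)) := by
    intro i₀ ω'
    have hQpos : 0 < lam ^ 2 + ∑ i, (x i - t * ω' i) ^ 2 := by positivity
    have hQne : Real.sqrt (lam ^ 2 + ∑ i, (x i - t * ω' i) ^ 2) ≠ 0 :=
      (Real.sqrt_pos.mpr hQpos).ne'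
    have hfun : (fun w : ℝ =>
        (lam / (((Fin.snoc x t : Fin (m+1) → ℝ) + w • (Pi.single i₀.castSucc 1 : Fin (m+1) → ℝ)) (Fin.last m))) *
          Real.sqrt (lam ^ 2 + ∑ i : Fin m,
            (((Fin.snoc x t : Fin (m+1) → ℝ) + w • (Pi.single i₀.castSucc 1 : Fin (m+1) → ℝ)) i.castSucc -
              ((Fin.snoc x t : Fin (m+1) → ℝ) + w • (Pi.single i₀.castSucc 1 : Fin (m+1) → ℝ)) (Fin.last m) *
              ω' i) ^ 2))
        = fun w : ℝ => (lam / t) *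
            Real.sqrt (lam ^ 2 + ∑ i, ((x i + w * (if i = i₀ then (1:ℝ) else 0)) - t * ω' i) ^ 2) := by
      funext w
      have h1 : ((Fin.snoc x t : Fin (m+1) → ℝ) + w • (Pi.single i₀.castSucc (1:ℝ) : Fin (m+1) → ℝ)) (Fin.last m) = t := by
        simp [Pi.single_apply, (Fin.castSucc_lt_last i₀).ne']
      have h2 : ∀ i : Fin m, ((Fin.snoc x t : Fin (m+1) → ℝ) + w • (Pi.single i₀.castSucc (1:ℝ) : Fin (m+1) → ℝ)) i.castSucc
          = x i + w * (if i = i₀ then (1:ℝ) else 0) := by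
        intro i
        simp [Pi.single_apply, Fin.castSucc_inj]
      simp only [h1, h2]
    rw [hfun]
    have hin : ∀ i : Fin m, HasDerivAt
        (fun w : ℝ => ((x i + w * (if i = i₀ then (1:ℝ) else 0)) - t * ω' i) ^ 2)
        (2 * (x i - t * ω' i) * (if i = i₀ then (1:ℝ) else 0)) 0 := by
      intro i
      have h3 : HasDerivAt (fun w : ℝ => (x i + w * (if i = i₀ then (1:ℝ) else 0)) - t * ω' i)
          (if i = i₀ then (1:ℝ) else 0) 0 := by
        simpa only [one_mul, id_eq] using
          (((hasDerivAt_id (0:ℝ)).mul_const (if i = i₀ then (1:ℝ) else 0)).const_add (x i)).sub_const (t * ω' i)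
      refine (h3.fun_pow 2).congr_deriv (Eq.symm ?_)
      norm_num
    have hsum : HasDerivAt
        (fun w : ℝ => lam ^ 2 + ∑ i, ((x i + w * (if i = i₀ then (1:ℝ) else 0)) - t * ω' i) ^ 2)
        (2 * (x i₀ - t * ω' i₀)) 0 := by
      have h4 := (HasDerivAt.fun_sum (fun i (_ : i ∈ Finset.univ) => hin i)).const_add (lam ^ 2)
      refine h4.congr_deriv (Eq.symm ?_)
      simp [mul_ite, Finset.sum_ite_eq']
    have hs := (hsum.sqrt (by positivity)).const_mul (lam / t)
    rw [hs.deriv]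
    rw [show (lam ^ 2 + ∑ i, ((x i + 0 * (if i = i₀ then (1:ℝ) else 0)) - t * ω' i) ^ 2)
        = lam ^ 2 + ∑ i, (x i - t * ω' i) ^ 2 from by norm_num]
    rw [mul_div_mul_left _ _ (two_ne_zero)]
  -- inner derivative, time direction
  have hinnerB : ∀ (ω' : Fin m → ℝ),
      deriv (fun w : ℝ =>
        (lam / (((Fin.snoc x t : Fin (m+1) → ℝ) + w • (Pi.single (Fin.last m) 1 : Fin (m+1) → ℝ)) (Fin.last m))) *
          Real.sqrt (lam ^ 2 + ∑ i : Fin m,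
            (((Fin.snoc x t : Fin (m+1) → ℝ) + w • (Pi.single (Fin.last m) 1 : Fin (m+1) → ℝ)) i.castSucc -
              ((Fin.snoc x t : Fin (m+1) → ℝ) + w • (Pi.single (Fin.last m) 1 : Fin (m+1) → ℝ)) (Fin.last m) *
              ω' i) ^ 2)) 0
      = -(lam / t^2) * Real.sqrt (lam ^ 2 + ∑ i, (x i - t * ω' i) ^ 2)
        + (lam / t) * (-(∑ i, (x i - t * ω' i) * ω' i)
            / Real.sqrt (lam ^ 2 + ∑ i, (x i - t * ω' i) ^ 2)) := by
    intro ω'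
    have hQpos : 0 < lam ^ 2 + ∑ i, (x i - t * ω' i) ^ 2 := by positivity
    have hQne : Real.sqrt (lam ^ 2 + ∑ i, (x i - t * ω' i) ^ 2) ≠ 0 :=
      (Real.sqrt_pos.mpr hQpos).ne'
    have hfun : (fun w : ℝ =>
        (lam / (((Fin.snoc x t : Fin (m+1) → ℝ) + w • (Pi.single (Fin.last m) 1 : Fin (m+1) → ℝ)) (Fin.last m))) *
          Real.sqrt (lam ^ 2 + ∑ i : Fin m,
            (((Fin.snoc x t : Fin (m+1) → ℝ) + w • (Pi.single (Fin.last m) 1 : Fin (m+1) → ℝ)) i.castSucc -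
              ((Fin.snoc x t : Fin (m+1) → ℝ) + w • (Pi.single (Fin.last m) 1 : Fin (m+1) → ℝ)) (Fin.last m) *
              ω' i) ^ 2))
        = fun w : ℝ => (lam / (t + w)) *
            Real.sqrt (lam ^ 2 + ∑ i, (x i - (t + w) * ω' i) ^ 2) := by
      funext w
      have h1 : ((Fin.snoc x t : Fin (m+1) → ℝ) + w • (Pi.single (Fin.last m) (1:ℝ) : Fin (m+1) → ℝ)) (Fin.last m) = t + w := by
        simp
      have h2 : ∀ i : Fin m, ((Fin.snoc x t : Fin (m+1) → ℝ) + w • (Pi.single (Fin.last m) (1:ℝ) : Fin (m+1) → ℝ)) i.castSucc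
          = x i := by
        intro i
        simp [Pi.single_apply, (Fin.castSucc_lt_last i).ne]
      simp only [h1, h2]
    rw [hfun]
    have hdiv : HasDerivAt (fun w : ℝ => lam / (t + w)) (-(lam / t^2)) 0 := by
      have h := (hasDerivAt_const (0:ℝ) lam).div ((hasDerivAt_id (0:ℝ)).const_add t)
        (by simpa using ht)
      refine h.congr_deriv (Eq.symm ?_)
      simp only [id, add_zero]
      field_simp
      ring
    have hterm : ∀ i : Fin m, HasDerivAt (fun w : ℝ => (x i - (t + w) * ω' i) ^ 2)
        (2 * (x i - t * ω' i) * (-(ω' i))) 0 := by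
      intro i
      have h3 : HasDerivAt (fun w : ℝ => x i - (t + w) * ω' i) (-(ω' i)) 0 := by
        simpa only [one_mul, id_eq] using
          (((hasDerivAt_id (0:ℝ)).const_add t).mul_const (ω' i)).const_sub (x i)
      refine (h3.fun_pow 2).congr_deriv (Eq.symm ?_)
      norm_num
    have hsum : HasDerivAt
        (fun w : ℝ => lam ^ 2 + ∑ i, (x i - (t + w) * ω' i) ^ 2)
        (-(2 * ∑ i, (x i - t * ω' i) * ω' i)) 0 := by
      have h4 := (HasDerivAt.fun_sum (fun i (_ : i ∈ Finset.univ) => hterm i)).const_add (lam ^ 2)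
      refine h4.congr_deriv (Eq.symm ?_)
      rw [Finset.mul_sum, ← Finset.sum_neg_distrib]
      exact Finset.sum_congr rfl fun i _ => by ring
    have hsq := hsum.sqrt (by positivity)
    have htot := hdiv.fun_mul hsq
    rw [htot.deriv]
    rw [show (lam ^ 2 + ∑ i, (x i - (t + 0) * ω' i) ^ 2)
        = lam ^ 2 + ∑ i, (x i - t * ω' i) ^ 2 from by norm_num]
    rw [show (t + (0:ℝ)) = t from by norm_num]
    field_simp
  -- outer derivative building blocks
  have hP' : HasDerivAt (fun s : ℝ => q - 2*s*t*v j + s^2*t^2) (-(2*t*v j)) 0 := by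
    have h2 : HasDerivAt (fun s : ℝ => s^2*t^2) 0 0 := by
      simpa using (hasDerivAt_pow 2 (0:ℝ)).mul_const (t^2)
    have h3 : HasDerivAt (fun s : ℝ => q - 2*s*t*v j) (-(2*t*v j)) 0 := by
      have h0 : (fun s : ℝ => q - 2*s*t*v j) = fun s : ℝ => q - s*(2*t*v j) := by
        funext s; ring
      rw [h0]
      simpa using ((hasDerivAt_id (0:ℝ)).mul_const (2*t*v j)).const_sub q
    simpa using h3.fun_add h2
  have hsq : HasDerivAt (fun s : ℝ => Real.sqrt (q - 2*s*t*v j + s^2*t^2))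
      (-(2*t*v j) / (2*Real.sqrt q)) 0 := by
    have h := hP'.sqrt (hPpos 0).ne'
    rw [show q - 2*(0:ℝ)*t*v j + (0:ℝ)^2*t^2 = q from by norm_num] at h
    exact h
  have hden0 : Real.sqrt (q - 2*(0:ℝ)*t*v j + (0:ℝ)^2*t^2) ≠ 0 := by
    rw [show q - 2*(0:ℝ)*t*v j + (0:ℝ)^2*t^2 = q from by norm_num]
    exact hrne
  -- value of the castSucc entries
  have hAval : ∀ i₀ : Fin m,
      deriv (fun s : ℝ => deriv (fun w : ℝ =>
        (lam / (((Fin.snoc x t : Fin (m+1) → ℝ) + w • (Pi.single i₀.castSucc 1 : Fin (m+1) → ℝ)) (Fin.last m))) *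
          Real.sqrt (lam ^ 2 + ∑ i : Fin m,
            (((Fin.snoc x t : Fin (m+1) → ℝ) + w • (Pi.single i₀.castSucc 1 : Fin (m+1) → ℝ)) i.castSucc -
              ((Fin.snoc x t : Fin (m+1) → ℝ) + w • (Pi.single i₀.castSucc 1 : Fin (m+1) → ℝ)) (Fin.last m) *
              (ω + s • (Pi.single j 1 : Fin m → ℝ)) i) ^ 2)) 0) 0
      = lam * v i₀ * v j / (Real.sqrt q)^3
          - lam * (if i₀ = j then (1:ℝ) else 0) / Real.sqrt q := by
    intro i₀
    have hfs : (fun s : ℝ => deriv (fun w : ℝ =>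
        (lam / (((Fin.snoc x t : Fin (m+1) → ℝ) + w • (Pi.single i₀.castSucc 1 : Fin (m+1) → ℝ)) (Fin.last m))) *
          Real.sqrt (lam ^ 2 + ∑ i : Fin m,
            (((Fin.snoc x t : Fin (m+1) → ℝ) + w • (Pi.single i₀.castSucc 1 : Fin (m+1) → ℝ)) i.castSucc -
              ((Fin.snoc x t : Fin (m+1) → ℝ) + w • (Pi.single i₀.castSucc 1 : Fin (m+1) → ℝ)) (Fin.last m) *
              (ω + s • (Pi.single j 1 : Fin m → ℝ)) i) ^ 2)) 0)
        = fun s : ℝ => (lam/t) * ((v i₀ - s*t*(if i₀ = j then (1:ℝ) else 0))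
            / Real.sqrt (q - 2*s*t*v j + s^2*t^2)) := by
      funext s
      rw [hinnerA i₀ (ω + s • (Pi.single j 1 : Fin m → ℝ)), hnum s i₀, hPid s]
    rw [hfs]
    have hnum' : HasDerivAt (fun s : ℝ => v i₀ - s*t*(if i₀ = j then (1:ℝ) else 0))
        (-(t*(if i₀ = j then (1:ℝ) else 0))) 0 := by
      have h0 : (fun s : ℝ => v i₀ - s*t*(if i₀ = j then (1:ℝ) else 0))
          = fun s : ℝ => v i₀ - s*(t*(if i₀ = j then (1:ℝ) else 0)) := by funext s; ring
      rw [h0]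
      simpa using ((hasDerivAt_id (0:ℝ)).mul_const
        (t*(if i₀ = j then (1:ℝ) else 0))).const_sub (v i₀)
    have hdv := (hnum'.fun_div hsq hden0).const_mul (lam/t)
    rw [hdv.deriv]
    rw [show q - 2*(0:ℝ)*t*v j + (0:ℝ)^2*t^2 = q from by norm_num]
    generalize hρ : Real.sqrt q = ρ
    have hρne : ρ ≠ 0 := hρ ▸ hrne
    by_cases hij : i₀ = j
    · subst hij
      simp only [if_pos rfl]
      field_simp
      ring
    · simp only [if_neg hij]
      field_simp
      ring
  -- value of the last entry
  have hBval :
      deriv (fun s : ℝ => deriv (fun w : ℝ =>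
        (lam / (((Fin.snoc x t : Fin (m+1) → ℝ) + w • (Pi.single (Fin.last m) 1 : Fin (m+1) → ℝ)) (Fin.last m))) *
          Real.sqrt (lam ^ 2 + ∑ i : Fin m,
            (((Fin.snoc x t : Fin (m+1) → ℝ) + w • (Pi.single (Fin.last m) 1 : Fin (m+1) → ℝ)) i.castSucc -
              ((Fin.snoc x t : Fin (m+1) → ℝ) + w • (Pi.single (Fin.last m) 1 : Fin (m+1) → ℝ)) (Fin.last m) *
              (ω + s • (Pi.single j 1 : Fin m → ℝ)) i) ^ 2)) 0) 0
      = lam * ω j / Real.sqrt q - lam * v j * (∑ i, v i * ω i) / (Real.sqrt q)^3 := by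
    have hfs : (fun s : ℝ => deriv (fun w : ℝ =>
        (lam / (((Fin.snoc x t : Fin (m+1) → ℝ) + w • (Pi.single (Fin.last m) 1 : Fin (m+1) → ℝ)) (Fin.last m))) *
          Real.sqrt (lam ^ 2 + ∑ i : Fin m,
            (((Fin.snoc x t : Fin (m+1) → ℝ) + w • (Pi.single (Fin.last m) 1 : Fin (m+1) → ℝ)) i.castSucc -
              ((Fin.snoc x t : Fin (m+1) → ℝ) + w • (Pi.single (Fin.last m) 1 : Fin (m+1) → ℝ)) (Fin.last m) *
              (ω + s • (Pi.single j 1 : Fin m → ℝ)) i) ^ 2)) 0)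
        = fun s : ℝ => -(lam/t^2) * Real.sqrt (q - 2*s*t*v j + s^2*t^2)
            + (lam/t) * (-((∑ i, v i * ω i) + s*(v j - t*ω j) - s^2*t)
                / Real.sqrt (q - 2*s*t*v j + s^2*t^2)) := by
      funext s
      rw [hinnerB (ω + s • (Pi.single j 1 : Fin m → ℝ)), hPid s, hNid s]
    rw [hfs]
    have hN' : HasDerivAt (fun s : ℝ => (∑ i, v i * ω i) + s*(v j - t*ω j) - s^2*t)
        (v j - t*ω j) 0 := by
      have h1 : HasDerivAt (fun s : ℝ => (∑ i, v i * ω i) + s*(v j - t*ω j)) (v j - t*ω j) 0 := by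
        simpa using ((hasDerivAt_id (0:ℝ)).mul_const (v j - t*ω j)).const_add (∑ i, v i * ω i)
      have h2 : HasDerivAt (fun s : ℝ => s^2*t) 0 0 := by
        simpa using (hasDerivAt_pow 2 (0:ℝ)).mul_const t
      simpa using h1.fun_sub h2
    have h1 := hsq.const_mul (-(lam/t^2))
    have h2 := (hN'.fun_neg.fun_div hsq hden0).const_mul (lam/t)
    have htot := h1.fun_add h2
    rw [htot.deriv]
    rw [show q - 2*(0:ℝ)*t*v j + (0:ℝ)^2*t^2 = q from by norm_num]
    generalize hρ : Real.sqrt q = ρ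
    have hρne : ρ ≠ 0 := hρ ▸ hrne
    field_simp
    ring
  -- assemble
  rw [Fin.sum_univ_castSucc]
  simp only [Fin.snoc_castSucc, Fin.snoc_last, one_mul, hAval, hBval]
  have hterm2 : ∀ i : Fin m,
      ω i * (lam * v i * v j / (Real.sqrt q)^3 - lam * (if i = j then (1:ℝ) else 0) / Real.sqrt q)
      = (v i * ω i) * (lam * v j / (Real.sqrt q)^3)
          - (if i = j then lam * ω j / Real.sqrt q else 0) := by
    intro i
    by_cases hi : i = j
    · subst hi; simp; ring
    · simp [hi]; ring
  rw [Finset.sum_congr rfl fun i _ => hterm2 i, Finset.sum_sub_distrib, ← Finset.sum_mul,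
    Finset.sum_ite_eq' Finset.univ j]
  simp only [Finset.mem_univ, if_true]
  ring


set_option maxHeartbeats 1000000 in
/-- the rescaled Gauss map of the phase
`φ^λ(x,t;ω) = (λ/t)√(λ² + ‖x − tω‖²)` is parallel to `(ω,1)`.
The wedge `∂_{ω_1}∇_{x,t}φ^λ ∧ ⋯ ∧ ∂_{ω_m}∇_{x,t}φ^λ` (with `m = n−1 ≥ 1`)
is encoded via its Hodge star `W`, characterized by
`det (rows a_1,…,a_m,u) = ⟪W, u⟫` for all `u : ℝⁿ`; the claim is `W = c • (ω,1)`,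
i.e. `det (rows a_1,…,a_m,u) = c·⟪(ω,1),u⟫` for all `u`. -/
theorem stmt_6 (m : ℕ) (hm : 1 ≤ m) (lam : ℝ) (hlam : 0 < lam)
    (x ω : Fin m → ℝ) (t : ℝ) (ht : t ≠ 0) :
    let φ : (Fin (m + 1) → ℝ) → (Fin m → ℝ) → ℝ := fun X w =>
      (lam / X (Fin.last m)) *
        Real.sqrt (lam ^ 2 + ∑ i : Fin m, (X i.castSucc - X (Fin.last m) * w i) ^ 2)
    let X0 : Fin (m + 1) → ℝ := Fin.snoc x t
    let A : Fin m → Fin (m + 1) → ℝ := fun j k =>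
      deriv (fun s : ℝ => deriv (fun w : ℝ =>
          φ (X0 + w • (Pi.single k 1 : Fin (m + 1) → ℝ))
            (ω + s • (Pi.single j 1 : Fin m → ℝ))) 0) 0
    ∃ c : ℝ, ∀ u : Fin (m + 1) → ℝ,
      (Matrix.of (Fin.snoc A u)).det =
        c * ∑ k, (Fin.snoc ω 1 : Fin (m + 1) → ℝ) k * u k := by
  intro φ X0 A
  refine aux_det_parallel A (Fin.snoc ω 1) (by simp) ?_
  intro j
  exact aux_row m lam hlam x ω t ht j
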